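/- Let A ⊆ ℕ be any set and n ≥ 1. Then A is n-join irreducible if and only if {Z : Z <ₑ A} is a union of n ideals. -/

import Mathlib

/-- The canonical finite set with index `e` (via binary representation). -/
def dSet (e : ℕ) : Set ℕ := {i | Nat.testBit e i}

/-- A set of naturals is computably enumerable if it is the domain of a
partial computable function. -/
def CE (A : Set ℕ) : Prop := ∃ f : ℕ →. ℕ, Partrec f ∧ A = f.Dom

/-- A standard enumeration `(Γₑ)ₑ` of all c.e. subsets of `ℕ`. -/
def ceSet (e : ℕ) : Set ℕ := ((Denumerable.ofNat Nat.Partrec.Code e).eval).Dom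

/-- The `e`-th enumeration operator applied to `X`:
`Γₑ(X) = {x : ∃ i, ⟨x,i⟩ ∈ Γₑ ∧ Dᵢ ⊆ X}`. -/
def enumOp (e : ℕ) (X : Set ℕ) : Set ℕ :=
  {x | ∃ i, Nat.pair x i ∈ ceSet e ∧ dSet i ⊆ X}

/-- Enumeration reducibility `A ≤ₑ B`. -/
def EnumRed (A B : Set ℕ) : Prop :=
  ∃ W : Set ℕ, CE W ∧ ∀ x, x ∈ A ↔ ∃ e, Nat.pair x e ∈ W ∧ dSet e ⊆ B

/-- Enumeration equivalence `A ≡ₑ B`. -/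
def EnumEquiv (A B : Set ℕ) : Prop := EnumRed A B ∧ EnumRed B A

/-- Strict enumeration reducibility `A <ₑ B`. -/
def EnumLt (A B : Set ℕ) : Prop := EnumRed A B ∧ ¬ EnumRed B A

/-- The join `X ⊕ Y = {2n : n ∈ X} ∪ {2n+1 : n ∈ Y}`. -/
def ejoin (X Y : Set ℕ) : Set ℕ :=
  {n | (∃ m ∈ X, n = 2 * m) ∨ ∃ m ∈ Y, n = 2 * m + 1}

/-- `K_X = {⟨e,x⟩ : x ∈ Γₑ(X)}`. -/
def KSet (X : Set ℕ) : Set ℕ := {n | n.unpair.2 ∈ enumOp n.unpair.1 X}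

/-- The enumeration jump `X' = K_X ⊕ (ℕ \ K_X)`. -/
def ejump (X : Set ℕ) : Set ℕ := ejoin (KSet X) (KSet X)ᶜ

/-- The skip `X^◇ = ℕ \ K_X`. -/
def eskip (X : Set ℕ) : Set ℕ := (KSet X)ᶜ

/-- Iterated skip `X^⟨n⟩`. -/
def eskipIter : ℕ → Set ℕ → Set ℕ
  | 0, X => X
  | n + 1, X => eskip (eskipIter n X)

/-- `0'ₑ`, the enumeration jump of `∅`. -/
def zeroJump : Set ℕ := ejump ∅

/-- A set is `Σ⁰₂` iff it is `≤ₑ 0'ₑ`. -/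
def Sigma02 (A : Set ℕ) : Prop := EnumRed A zeroJump

/-- A Σ⁰₂ set is low iff `X' ≤ₑ 0'ₑ`. -/
def LowE (A : Set ℕ) : Prop := EnumRed (ejump A) (ejump ∅)

/-- A Σ⁰₂ set is low₃ iff `X''' ≤ₑ 0'''ₑ`. -/
def Low3 (A : Set ℕ) : Prop :=
  EnumRed (ejump (ejump (ejump A))) (ejump (ejump (ejump (∅ : Set ℕ))))

/-- A Σ⁰₂ set is high₂ iff `X'' ≥ₑ 0'''ₑ`. -/
def High2 (A : Set ℕ) : Prop :=
  EnumRed (ejump (ejump (ejump (∅ : Set ℕ)))) (ejump (ejump A))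

/-- `A` is join irreducible. -/
def JoinIrr (A : Set ℕ) : Prop :=
  ∀ X Y, EnumLt X A → EnumLt Y A → EnumLt (ejoin X Y) A

/-- `A` is `n`-join irreducible. -/
def NJoinIrr (n : ℕ) (A : Set ℕ) : Prop :=
  ∀ As : Fin (n + 1) → Set ℕ, (∀ i, EnumLt (As i) A) →
    ∃ i j, i ≠ j ∧ EnumLt (ejoin (As i) (As j)) A

/-- `(A,B)` is an Ahmad pair. -/
def AhmadPair (A B : Set ℕ) : Prop :=
  ¬ EnumRed A B ∧ ∀ Z, EnumLt Z A → EnumRed Z B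

/-- `(A, B₀, …, B_{n-1})` is an Ahmad `n`-pair. -/
def AhmadNPair {n : ℕ} (A : Set ℕ) (B : Fin n → Set ℕ) : Prop :=
  (∀ i, ¬ EnumRed A (B i)) ∧ ∀ Z, EnumLt Z A → ∃ i, EnumRed Z (B i)

/-- `(A,B)` is an Ahmad pair in the cone above `D`. -/
def AhmadPairAbove (D A B : Set ℕ) : Prop :=
  EnumLt D A ∧ EnumLt D B ∧ ¬ EnumRed A B ∧
    ∀ Z, EnumRed D Z → EnumLt Z A → EnumRed Z B

/-- In an Ahmad `n`-pair `(A,B)`, the member `B i` is essential. -/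
def EssentialHalf {n : ℕ} (A : Set ℕ) (B : Fin n → Set ℕ) (i : Fin n) : Prop :=
  ∃ C, EnumLt C A ∧ EnumLt C (B i) ∧ ∀ j, j ≠ i → ¬ EnumRed C (B j)

/-- `f` is an Ahmad sequence for `A`. -/
def AhmadSeq (A : Set ℕ) (f : ℕ → ℕ) : Prop :=
  Computable f ∧ ∀ X : Set ℕ, (∃ n, enumOp (f n) zeroJump = X) ↔ EnumLt X A

/-- `A` has an Ahmad sequence. -/
def HasAhmadSeq (A : Set ℕ) : Prop := ∃ f : ℕ → ℕ, AhmadSeq A f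

/-- `X` is `Σ⁰₄`: membership has a 4-quantifier form over a computable relation. -/
def Sigma04 (X : Set ℕ) : Prop :=
  ∃ R : ℕ → ℕ → ℕ → ℕ → ℕ → Bool,
    Computable (fun p : ℕ × ℕ × ℕ × ℕ × ℕ => R p.1 p.2.1 p.2.2.1 p.2.2.2.1 p.2.2.2.2) ∧
    ∀ x, x ∈ X ↔ ∃ a, ∀ b, ∃ c, ∀ d, R x a b c d = true

/-- One-one reducibility `A ≤₁ B`. -/
def OneRed (A B : Set ℕ) : Prop :=
  ∃ f : ℕ → ℕ, Computable f ∧ Function.Injective f ∧ ∀ x, x ∈ A ↔ f x ∈ B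

/-- One-one equivalence `A ≡₁ B`. -/
def OneEquiv (A B : Set ℕ) : Prop := OneRed A B ∧ OneRed B A

/-- `X` has a good approximation: a computable sequence of (canonical indices of)
finite sets with infinitely many good stages, converging to `X` along good stages. -/
def GoodApprox (X : Set ℕ) : Prop :=
  ∃ g : ℕ → ℕ, Computable g ∧ {s | dSet (g s) ⊆ X}.Infinite ∧
    ∀ n, ∃ s₀, ∀ s, dSet (g s) ⊆ X → s₀ ≤ s → (n ∈ dSet (g s) ↔ n ∈ X)

/-- A family of subsets of `ℕ` is an ideal: downward closed under `≤ₑ` and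
closed under `⊕`. -/
def IsIdeal (F : Set (Set ℕ)) : Prop :=
  (∀ X ∈ F, ∀ Y, EnumRed Y X → Y ∈ F) ∧ ∀ X ∈ F, ∀ Y ∈ F, ejoin X Y ∈ F

/-- `𝓢` is a proper covering of `{Z : Z <ₑ A}` by `n` ideals: a family of `n`
ideals whose union is `{Z : Z <ₑ A}`, each essential (not contained in another). -/
def ProperIdealCover (A : Set ℕ) (n : ℕ) (S : Set (Set (Set ℕ))) : Prop :=
  S.Finite ∧ S.ncard = n ∧ (∀ F ∈ S, IsIdeal F) ∧
    ⋃₀ S = {Z | EnumLt Z A} ∧ ∀ F ∈ S, ∀ G ∈ S, F ⊆ G → F = G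

/-! ### Auxiliary lemmas for `stmt13` -/

section Stmt13Aux

open Nat.Partrec (Code)
open Nat.Partrec.Code

lemma mem_dSet' {e i : ℕ} : i ∈ dSet e ↔ Nat.testBit e i := Iff.rfl

lemma dSet_two_pow' (x : ℕ) : dSet (2^x) = {x} := by
  ext i
  simp only [mem_dSet', Set.mem_singleton_iff]
  constructor
  · intro h
    by_contra hne
    rw [Nat.testBit_two_pow_of_ne (Ne.symm hne)] at h
    exact Bool.false_ne_true h
  · rintro rfl; exact Nat.testBit_two_pow_self

lemma lt_of_mem_dSet' {e i : ℕ} (h : i ∈ dSet e) : i < e := by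
  by_contra hle
  push_neg at hle
  have : e < 2 ^ i := lt_of_le_of_lt hle Nat.lt_two_pow_self
  rw [mem_dSet', Nat.testBit_eq_false_of_lt this] at h
  exact Bool.false_ne_true h

lemma ce_of_sigma1 {p : ℕ → ℕ → Bool} (hp : Computable₂ p) :
    CE {n | ∃ s, p n s = true} := by
  refine ⟨fun n => Nat.rfind (fun s => Part.some (p n s)), Partrec.rfind hp, ?_⟩
  ext n
  simp only [PFun.mem_dom, Set.mem_setOf_eq]
  change (∃ s, p n s = true) ↔ (Nat.rfind fun s => Part.some (p n s)).Dom
  refine Iff.trans ?_ (Nat.rfind_dom (p := fun s => Part.some (p n s))).symm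
  constructor
  · rintro ⟨s, hs⟩
    exact ⟨s, by simpa using hs, fun {m} _ => trivial⟩
  · rintro ⟨s, hs, -⟩
    exact ⟨s, by simpa using hs⟩

lemma ce_code {W : Set ℕ} (h : CE W) :
    ∃ c : Code, ∀ n, n ∈ W ↔ ∃ s, (evaln s c n).isSome := by
  obtain ⟨f, hf, rfl⟩ := h
  obtain ⟨c, hc⟩ := exists_code.1 (Partrec.nat_iff.1 hf)
  refine ⟨c, fun n => ?_⟩
  simp only [PFun.mem_dom, ← hc]
  constructor
  · rintro ⟨v, hv⟩
    obtain ⟨s, hs⟩ := evaln_complete.1 hv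
    exact ⟨s, by simp [Option.isSome_iff_exists, Option.mem_def] at hs ⊢; exact ⟨v, hs⟩⟩
  · rintro ⟨s, hs⟩
    obtain ⟨v, hv⟩ := Option.isSome_iff_exists.1 hs
    exact ⟨v, evaln_sound hv⟩

lemma pow2_comp : Computable₂ fun (a b : ℕ) => a ^ b :=
  (Primrec₂.unpaired'.1 Nat.Primrec.pow).to_comp

lemma enumRed_of_mRed {X Y : Set ℕ} {h : ℕ → ℕ} (hh : Computable h)
    (hiff : ∀ k, k ∈ X ↔ h k ∈ Y) : EnumRed X Y := by
  refine ⟨{n | ∃ s, (fun n _ => decide (n.unpair.2 = 2 ^ h n.unpair.1)) n s = true},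
    ce_of_sigma1 ?_, ?_⟩
  · have h1 : Computable fun n : ℕ => n.unpair.2 :=
      (Primrec.snd.comp Primrec.unpair).to_comp
    have h2 : Computable fun n : ℕ => 2 ^ h n.unpair.1 :=
      pow2_comp.comp (Computable.const 2)
        (hh.comp (Primrec.fst.comp Primrec.unpair).to_comp)
    exact Computable₂.mk <| (Primrec.eq.decide.to_comp.comp (h1.comp Computable.fst)
      (h2.comp Computable.fst))
  · intro x
    constructor
    · intro hx
      refine ⟨2 ^ h x, ⟨0, by simp⟩, ?_⟩
      rw [dSet_two_pow']
      simpa using (hiff x).1 hx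
    · rintro ⟨e, ⟨s, he⟩, hsub⟩
      simp only [Nat.unpair_pair, decide_eq_true_eq] at he
      subst he
      rw [dSet_two_pow'] at hsub
      exact (hiff x).2 (hsub rfl)

lemma enumRed_refl (X : Set ℕ) : EnumRed X X :=
  enumRed_of_mRed Computable.id (fun _ => Iff.rfl)

lemma mem_ejoin_two_mul {X Y : Set ℕ} {m : ℕ} : 2*m ∈ ejoin X Y ↔ m ∈ X := by
  constructor
  · rintro (⟨m', hm', he⟩ | ⟨m', hm', he⟩) <;> [skip; omega]
    obtain rfl : m = m' := by omega
    exact hm'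
  · intro h; exact Or.inl ⟨m, h, rfl⟩

lemma mem_ejoin_two_mul_add_one {X Y : Set ℕ} {m : ℕ} : 2*m+1 ∈ ejoin X Y ↔ m ∈ Y := by
  constructor
  · rintro (⟨m', hm', he⟩ | ⟨m', hm', he⟩) <;> [omega; skip]
    obtain rfl : m = m' := by omega
    exact hm'
  · intro h; exact Or.inr ⟨m, h, rfl⟩

lemma enumRed_left (X Y : Set ℕ) : EnumRed X (ejoin X Y) :=
  enumRed_of_mRed (Primrec.nat_double.to_comp)
    (fun k => by simpa using mem_ejoin_two_mul.symm)

lemma enumRed_right (X Y : Set ℕ) : EnumRed Y (ejoin X Y) :=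
  enumRed_of_mRed (Primrec.nat_double_succ.to_comp)
    (fun k => by simpa using mem_ejoin_two_mul_add_one.symm)

lemma evaln_isSome_primrec (c : Code) {g : ℕ × ℕ → ℕ} (hg : Primrec g) :
    Primrec fun p : ℕ × ℕ => (evaln p.2 c (g p)).isSome :=
  Primrec.option_isSome.comp <|
    primrec_evaln.comp <| ((Primrec.snd.pair (Primrec.const c)).pair hg)

lemma enumRed_join {X Y Z : Set ℕ} (hX : EnumRed X Z) (hY : EnumRed Y Z) :
    EnumRed (ejoin X Y) Z := by
  obtain ⟨W₁, hW₁, hX⟩ := hX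
  obtain ⟨W₂, hW₂, hY⟩ := hY
  obtain ⟨c₁, hc₁⟩ := ce_code hW₁
  obtain ⟨c₂, hc₂⟩ := ce_code hW₂
  set q : ℕ → ℕ → Bool := fun n s =>
    bif decide (n.unpair.1 % 2 = 0)
      then (evaln s c₁ (Nat.pair (n.unpair.1/2) n.unpair.2)).isSome
      else (evaln s c₂ (Nat.pair (n.unpair.1/2) n.unpair.2)).isSome with hq
  have hqc : Computable₂ q := by
    have hg : Primrec fun p : ℕ × ℕ =>
        Nat.pair (p.1.unpair.1/2) p.1.unpair.2 :=
      Primrec₂.natPair.comp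
        (Primrec.nat_div.comp (Primrec.fst.comp (Primrec.unpair.comp Primrec.fst))
          (Primrec.const 2))
        (Primrec.snd.comp (Primrec.unpair.comp Primrec.fst))
    have hcnd : Primrec fun p : ℕ × ℕ => decide (p.1.unpair.1 % 2 = 0) :=
      Primrec.eq.decide.comp
        (Primrec.nat_mod.comp (Primrec.fst.comp (Primrec.unpair.comp Primrec.fst))
          (Primrec.const 2)) (Primrec.const 0)
    exact Primrec₂.to_comp <|
      (Primrec.cond hcnd (evaln_isSome_primrec c₁ hg) (evaln_isSome_primrec c₂ hg))
  refine ⟨{n | ∃ s, q n s = true}, ce_of_sigma1 hqc, ?_⟩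
  have key : ∀ k e : ℕ, (Nat.pair k e ∈ {n | ∃ s, q n s = true}) ↔
      (if k % 2 = 0 then Nat.pair (k/2) e ∈ W₁ else Nat.pair (k/2) e ∈ W₂) := by
    intro k e
    simp only [Set.mem_setOf_eq, hq, Nat.unpair_pair]
    by_cases hk : k % 2 = 0 <;> simp [hk, hc₁, hc₂]
  intro x
  rcases Nat.even_or_odd x with ⟨m, hm⟩ | ⟨m, hm⟩
  · subst hm
    have hx2 : (m + m) % 2 = 0 := by omega
    have hx3 : (m + m) / 2 = m := by omega
    rw [show m + m = 2*m by ring, mem_ejoin_two_mul, hX m]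
    constructor
    · rintro ⟨e, he, hs⟩
      exact ⟨e, by rw [key]; simpa [show 2*m = m+m by ring, hx2, hx3] using he, hs⟩
    · rintro ⟨e, he, hs⟩
      rw [key] at he
      exact ⟨e, by simpa [show 2*m = m+m by ring, hx2, hx3] using he, hs⟩
  · subst hm
    have hx2 : ¬ ((2*m + 1) % 2 = 0) := by omega
    have hx3 : (2*m + 1) / 2 = m := by omega
    rw [mem_ejoin_two_mul_add_one, hY m]
    constructor
    · rintro ⟨e, he, hs⟩
      exact ⟨e, by rw [key]; simpa [hx2, hx3] using he, hs⟩
    · rintro ⟨e, he, hs⟩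
      rw [key] at he
      exact ⟨e, by simpa [hx2, hx3] using he, hs⟩

/-! ### Bounded boolean quantifiers -/

/-- Bounded existential as a Bool. -/
def bAny (p : ℕ → Bool) : ℕ → Bool
  | 0 => false
  | k+1 => bAny p k || p k

/-- Bounded universal as a Bool. -/
def bAll (p : ℕ → Bool) : ℕ → Bool
  | 0 => true
  | k+1 => bAll p k && p k

lemma bAny_iff {p : ℕ → Bool} {k : ℕ} : bAny p k = true ↔ ∃ i < k, p i = true := by
  induction k with
  | zero => simp [bAny]
  | succ k ih =>
    simp only [bAny, Bool.or_eq_true, ih]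
    constructor
    · rintro (⟨i, hi, hp⟩ | hp)
      exacts [⟨i, by omega, hp⟩, ⟨k, by omega, hp⟩]
    · rintro ⟨i, hi, hp⟩
      rcases eq_or_lt_of_le (Nat.lt_succ_iff.1 hi) with rfl | hi'
      exacts [Or.inr hp, Or.inl ⟨i, hi', hp⟩]

lemma bAll_iff {p : ℕ → Bool} {k : ℕ} : bAll p k = true ↔ ∀ i < k, p i = true := by
  induction k with
  | zero => simp [bAll]
  | succ k ih =>
    simp only [bAll, Bool.and_eq_true, ih]
    constructor
    · rintro ⟨h1, h2⟩ i hi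
      rcases eq_or_lt_of_le (Nat.lt_succ_iff.1 hi) with rfl | hi'
      exacts [h2, h1 i hi']
    · intro h
      exact ⟨fun i hi => h i (by omega), h k (by omega)⟩

lemma bAny_eq_rec (p : ℕ → Bool) (k : ℕ) :
    bAny p k = Nat.rec false (fun n IH => IH || p n) k := by
  induction k with
  | zero => rfl
  | succ k ih => simp [bAny, ih]

lemma bAll_eq_rec (p : ℕ → Bool) (k : ℕ) :
    bAll p k = Nat.rec true (fun n IH => IH && p n) k := by
  induction k with
  | zero => rfl
  | succ k ih => simp [bAll, ih]

lemma bAny_primrec {α} [Primcodable α] {p : α → ℕ → Bool} (hp : Primrec₂ p)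
    {k : α → ℕ} (hk : Primrec k) : Primrec fun a => bAny (p a) (k a) := by
  have := Primrec.nat_rec' hk (Primrec.const false)
    (Primrec.to₂ (Primrec.or.comp (Primrec.snd.comp Primrec.snd)
      (hp.comp Primrec.fst (Primrec.fst.comp Primrec.snd))))
  exact this.of_eq fun a => (bAny_eq_rec (p a) (k a)).symm

lemma bAll_primrec {α} [Primcodable α] {p : α → ℕ → Bool} (hp : Primrec₂ p)
    {k : α → ℕ} (hk : Primrec k) : Primrec fun a => bAll (p a) (k a) := by
  have := Primrec.nat_rec' hk (Primrec.const true)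
    (Primrec.to₂ (Primrec.and.comp (Primrec.snd.comp Primrec.snd)
      (hp.comp Primrec.fst (Primrec.fst.comp Primrec.snd))))
  exact this.of_eq fun a => (bAll_eq_rec (p a) (k a)).symm

lemma testBit_primrec : Primrec₂ Nat.testBit := by
  have : Primrec₂ fun e y : ℕ => decide (e / 2 ^ y % 2 = 1) :=
    Primrec.eq.decide.comp
      (Primrec.nat_mod.comp
        (Primrec.nat_div.comp Primrec.fst
          ((Primrec₂.unpaired'.1 Nat.Primrec.pow).comp (Primrec.const 2) Primrec.snd))
        (Primrec.const 2))
      (Primrec.const 1)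
  exact this.of_eq fun e y => (Nat.testBit_eq_decide_div_mod_eq).symm

/-- Boolean test for `dSet cc ⊆ dSet d`. -/
def subB (cc d : ℕ) : Bool :=
  bAll (fun y => !(Nat.testBit cc y) || Nat.testBit d y) cc

lemma subB_iff {cc d : ℕ} : subB cc d = true ↔ dSet cc ⊆ dSet d := by
  rw [subB, bAll_iff]
  constructor
  · intro h y hy
    have := h y (lt_of_mem_dSet' hy)
    rw [mem_dSet'] at hy ⊢
    simpa [hy] using this
  · intro h y _
    by_cases hy : Nat.testBit cc y
    · simpa [hy, mem_dSet'] using h hy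
    · simp [hy]

lemma subB_primrec : Primrec₂ subB := by
  have : Primrec fun a : ℕ × ℕ =>
      bAll (fun y => !(Nat.testBit a.1 y) || Nat.testBit a.2 y) a.1 :=
    bAll_primrec (Primrec.to₂ (Primrec.or.comp
      (Primrec.not.comp (testBit_primrec.comp (Primrec.fst.comp Primrec.fst) Primrec.snd))
      (testBit_primrec.comp (Primrec.snd.comp Primrec.fst) Primrec.snd))) Primrec.fst
  exact Primrec.to₂ this

lemma isSome_mono {k k' : ℕ} {c : Code} {n : ℕ} (h : (evaln k c n).isSome)
    (hk : k ≤ k') : (evaln k' c n).isSome := by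
  obtain ⟨v, hv⟩ := Option.isSome_iff_exists.1 h
  exact Option.isSome_iff_exists.2 ⟨v, evaln_mono hk hv⟩

/-- The union of canonical finite sets, as a canonical index. -/
def dUnion (g : ℕ → ℕ) (e : ℕ) : ℕ :=
  (List.range e).foldr (fun y acc => if Nat.testBit e y then g y ||| acc else acc) 0

lemma mem_dSet_dUnion {g : ℕ → ℕ} {e i : ℕ} :
    i ∈ dSet (dUnion g e) ↔ ∃ y ∈ dSet e, i ∈ dSet (g y) := by
  have main : ∀ l : List ℕ, Nat.testBit
      (l.foldr (fun y acc => if Nat.testBit e y then g y ||| acc else acc) 0) i = true ↔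
      ∃ y ∈ l, Nat.testBit e y ∧ Nat.testBit (g y) i := by
    intro l
    induction l with
    | nil => simp [Nat.zero_testBit]
    | cons y l ih =>
      by_cases hy : Nat.testBit e y <;>
        simp [hy, Nat.testBit_lor, ih, or_and_left]
  rw [mem_dSet', dUnion, main]
  constructor
  · rintro ⟨y, _, h1, h2⟩; exact ⟨y, h1, h2⟩
  · rintro ⟨y, h1, h2⟩
    exact ⟨y, List.mem_range.2 (lt_of_mem_dSet' h1), h1, h2⟩

lemma enumRed_trans {A B C : Set ℕ} (h₁ : EnumRed A B) (h₂ : EnumRed B C) :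
    EnumRed A C := by
  obtain ⟨W₁, hW₁, hA⟩ := h₁
  obtain ⟨W₂, hW₂, hB⟩ := h₂
  obtain ⟨c₁, hc₁⟩ := ce_code hW₁
  obtain ⟨c₂, hc₂⟩ := ce_code hW₂
  set q : ℕ → ℕ → Bool := fun n s =>
    bAny (fun e => (evaln s c₁ (Nat.pair n.unpair.1 e)).isSome &&
      bAll (fun y => !(Nat.testBit e y) ||
        bAny (fun cc => (evaln s c₂ (Nat.pair y cc)).isSome && subB cc n.unpair.2) s) e) s
    with hqdef
  have hq : Computable₂ q := by
    have hinner : Primrec fun b : ((ℕ × ℕ) × ℕ) × ℕ =>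
        bAny (fun cc => (evaln b.1.1.2 c₂ (Nat.pair b.2 cc)).isSome &&
          subB cc b.1.1.1.unpair.2) b.1.1.2 := by
      apply bAny_primrec (p := fun (b : ((ℕ × ℕ) × ℕ) × ℕ) cc =>
          (evaln b.1.1.2 c₂ (Nat.pair b.2 cc)).isSome && subB cc b.1.1.1.unpair.2)
      · exact Primrec.to₂ (Primrec.and.comp
          (Primrec.option_isSome.comp (primrec_evaln.comp
            (((Primrec.snd.comp (Primrec.fst.comp (Primrec.fst.comp Primrec.fst))).pair
              (Primrec.const c₂)).pair
              (Primrec₂.natPair.comp (Primrec.snd.comp Primrec.fst) Primrec.snd))))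
          (subB_primrec.comp Primrec.snd
            (Primrec.snd.comp (Primrec.unpair.comp
              (Primrec.fst.comp (Primrec.fst.comp (Primrec.fst.comp Primrec.fst)))))))
      · exact Primrec.snd.comp (Primrec.fst.comp Primrec.fst)
    have hmid : Primrec fun b : (ℕ × ℕ) × ℕ =>
        bAll (fun y => !(Nat.testBit b.2 y) ||
          bAny (fun cc => (evaln b.1.2 c₂ (Nat.pair y cc)).isSome &&
            subB cc b.1.1.unpair.2) b.1.2) b.2 := by
      apply bAll_primrec (p := fun (b : (ℕ × ℕ) × ℕ) y =>
          !(Nat.testBit b.2 y) ||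
            bAny (fun cc => (evaln b.1.2 c₂ (Nat.pair y cc)).isSome &&
              subB cc b.1.1.unpair.2) b.1.2)
      · exact Primrec.to₂ (Primrec.or.comp
          (Primrec.not.comp (testBit_primrec.comp (Primrec.snd.comp Primrec.fst) Primrec.snd))
          hinner)
      · exact Primrec.snd
    have houter : Primrec fun b : ℕ × ℕ =>
        bAny (fun e => (evaln b.2 c₁ (Nat.pair b.1.unpair.1 e)).isSome &&
          bAll (fun y => !(Nat.testBit e y) ||
            bAny (fun cc => (evaln b.2 c₂ (Nat.pair y cc)).isSome &&
              subB cc b.1.unpair.2) b.2) e) b.2 := by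
      apply bAny_primrec (p := fun (b : ℕ × ℕ) e =>
          (evaln b.2 c₁ (Nat.pair b.1.unpair.1 e)).isSome &&
            bAll (fun y => !(Nat.testBit e y) ||
              bAny (fun cc => (evaln b.2 c₂ (Nat.pair y cc)).isSome &&
                subB cc b.1.unpair.2) b.2) e)
      · exact Primrec.to₂ (Primrec.and.comp
          (Primrec.option_isSome.comp (primrec_evaln.comp
            (((Primrec.snd.comp Primrec.fst).pair (Primrec.const c₁)).pair
              (Primrec₂.natPair.comp
                (Primrec.fst.comp (Primrec.unpair.comp (Primrec.fst.comp Primrec.fst)))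
                Primrec.snd))))
          hmid)
      · exact Primrec.snd
    exact houter.to_comp
  refine ⟨{n | ∃ s, q n s = true}, ce_of_sigma1 hq, fun x => ?_⟩
  constructor
  · intro hx
    obtain ⟨e, he, heB⟩ := (hA x).1 hx
    have hch : ∀ y, ∃ cc t, y ∈ dSet e →
        (evaln t c₂ (Nat.pair y cc)).isSome ∧ dSet cc ⊆ C := by
      intro y
      by_cases hy : y ∈ dSet e
      · obtain ⟨cc, hcc, hccC⟩ := (hB y).1 (heB hy)
        obtain ⟨t, ht⟩ := (hc₂ _).1 hcc
        exact ⟨cc, t, fun _ => ⟨ht, hccC⟩⟩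
      · exact ⟨0, 0, fun h => absurd h hy⟩
    choose g t hgt using hch
    obtain ⟨s₀, hs₀⟩ := (hc₁ _).1 he
    set d := dUnion g e with hd
    have hdC : dSet d ⊆ C := by
      intro i hi
      obtain ⟨y, hy, hiy⟩ := mem_dSet_dUnion.1 hi
      exact (hgt y hy).2 hiy
    have hsub : ∀ y ∈ dSet e, dSet (g y) ⊆ dSet d := by
      intro y hy i hi
      exact mem_dSet_dUnion.2 ⟨y, hy, hi⟩
    set s := max s₀ ((Finset.range e).sup fun y => max (g y) (t y)) + e + 1 with hs
    refine ⟨d, ⟨s, ?_⟩, hdC⟩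
    rw [hqdef]
    simp only [Nat.unpair_pair]
    rw [bAny_iff]
    refine ⟨e, by omega, ?_⟩
    rw [Bool.and_eq_true]
    constructor
    · exact isSome_mono hs₀ (by omega)
    · rw [bAll_iff]
      intro y hy
      by_cases hye : Nat.testBit e y
      · have hymem : y ∈ dSet e := hye
        have hsup : max (g y) (t y) ≤ (Finset.range e).sup fun y => max (g y) (t y) :=
          Finset.le_sup (f := fun y => max (g y) (t y)) (Finset.mem_range.2 hy)
        rw [Bool.or_eq_true]
        right
        rw [bAny_iff]
        refine ⟨g y, by omega, ?_⟩
        rw [Bool.and_eq_true]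
        exact ⟨isSome_mono ((hgt y hymem).1) (by omega),
          subB_iff.2 (hsub y hymem)⟩
      · simp [hye]
  · rintro ⟨d, ⟨s, hqs⟩, hdC⟩
    rw [hqdef] at hqs
    simp only [Nat.unpair_pair] at hqs
    obtain ⟨e, -, hqe⟩ := bAny_iff.1 hqs
    rw [Bool.and_eq_true] at hqe
    obtain ⟨hev, hall⟩ := hqe
    refine (hA x).2 ⟨e, (hc₁ _).2 ⟨s, hev⟩, ?_⟩
    intro y hy
    have := bAll_iff.1 hall y (lt_of_mem_dSet' hy)
    rw [Bool.or_eq_true] at this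
    rcases this with hbad | hgood
    · rw [mem_dSet'] at hy; simp [hy] at hbad
    · obtain ⟨cc, -, hcc⟩ := bAny_iff.1 hgood
      rw [Bool.and_eq_true] at hcc
      exact (hB y).2 ⟨cc, (hc₂ _).2 ⟨s, hcc.1⟩,
        fun i hi => hdC (subB_iff.1 hcc.2 hi)⟩

end Stmt13Aux
section Stmt13Main

lemma enumLt_of_le_of_lt {U V A : Set ℕ} (h1 : EnumRed U V) (h2 : EnumLt V A) :
    EnumLt U A :=
  ⟨enumRed_trans h1 h2.1, fun hA => h2.2 (enumRed_trans hA h1)⟩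

lemma ejoin_le_ejoin {X Y U V : Set ℕ} (h1 : EnumRed X U) (h2 : EnumRed Y V) :
    EnumRed (ejoin X Y) (ejoin U V) :=
  enumRed_join (enumRed_trans h1 (enumRed_left U V))
    (enumRed_trans h2 (enumRed_right U V))

lemma ejoin_comm_le (X Y : Set ℕ) : EnumRed (ejoin X Y) (ejoin Y X) :=
  enumRed_join (enumRed_right Y X) (enumRed_left Y X)

theorem stmt13' (A : Set ℕ) (n : ℕ) (hn : 1 ≤ n) :
    NJoinIrr n A ↔
      ∃ F : Fin n → Set (Set ℕ), (∀ i, IsIdeal (F i)) ∧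
        (⋃ i, F i) = {Z | EnumLt Z A} := by
  constructor
  · -- forward direction
    intro hIrr
    classical
    have hex : ∃ m, NJoinIrr m A := ⟨n, hIrr⟩
    set m := Nat.find hex with hmdef
    have hm : NJoinIrr m A := Nat.find_spec hex
    have hmn : m ≤ n := Nat.find_min' hex hIrr
    match hm' : m, hm, hmn with
    | 0, hm, hmn =>
      -- no set is strictly below A
      have hempty : ∀ Z, ¬ EnumLt Z A := by
        intro Z hZ
        obtain ⟨i, j, hij, -⟩ := hm (fun _ => Z) (fun _ => hZ)
        exact hij (by apply Fin.ext; omega)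
      refine ⟨fun _ => ∅, fun i => ⟨fun X hX => absurd hX (Set.notMem_empty X),
        fun X hX => absurd hX (Set.notMem_empty X)⟩, ?_⟩
      ext Z
      simp only [Set.mem_iUnion, Set.mem_empty_iff_false, exists_false, Set.mem_setOf_eq,
        false_iff]
      exact hempty Z
    | k+1, hm, hmn =>
      have hknot : ¬ NJoinIrr k A := Nat.find_min hex (by omega)
      rw [NJoinIrr] at hknot
      push_neg at hknot
      obtain ⟨As, hAs, hpair⟩ := hknot
      -- hpair : ∀ i j, i ≠ j → ¬ EnumLt (ejoin (As i) (As j)) A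
      have hAsle : ∀ i, EnumRed (As i) A := fun i => (hAs i).1
      -- the ideals
      set G : Fin (k+1) → Set (Set ℕ) := fun i => {Y | EnumLt (ejoin Y (As i)) A}
        with hGdef
      have hGlt : ∀ i, ∀ Y ∈ G i, EnumLt Y A := by
        intro i Y hY
        exact enumLt_of_le_of_lt (enumRed_left Y (As i)) hY
      have hGideal : ∀ i, IsIdeal (G i) := by
        intro i
        constructor
        · -- downward closure
          intro X hX Y hYX
          exact enumLt_of_le_of_lt (ejoin_le_ejoin hYX (enumRed_refl _)) hX
        · -- closure under join
          intro X hX Y hY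
          -- apply (k+1)-join irreducibility to the family `Fin (k+2)`
          set Bs : Fin (k+2) → Set ℕ :=
            Function.update (Fin.snoc As (ejoin Y (As i))) (Fin.castSucc i)
              (ejoin X (As i)) with hBs
          have hBlast : Bs (Fin.last (k+1)) = ejoin Y (As i) := by
            rw [hBs, Function.update_of_ne (Fin.castSucc_lt_last i).ne', Fin.snoc_last]
          have hBi : Bs (Fin.castSucc i) = ejoin X (As i) := by
            rw [hBs, Function.update_self]
          have hBj : ∀ j : Fin (k+1), j ≠ i → Bs (Fin.castSucc j) = As j := by
            intro j hj
            rw [hBs, Function.update_of_ne (by simpa [Fin.castSucc_inj] using hj),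
              Fin.snoc_castSucc]
          have hBslt : ∀ j, EnumLt (Bs j) A := by
            intro j
            refine Fin.lastCases ?_ ?_ j
            · rw [hBlast]; exact hY
            · intro j'
              by_cases hj : j' = i
              · subst hj; rw [hBi]; exact hX
              · rw [hBj j' hj]; exact hAs j'
          obtain ⟨a, b, hab, habLt⟩ := hm Bs hBslt
          -- classify the two indices
          have hclass : ∀ c : Fin (k+2),
              (c = Fin.last (k+1) ∧ Bs c = ejoin Y (As i)) ∨
              (c = Fin.castSucc i ∧ Bs c = ejoin X (As i)) ∨
              (∃ j : Fin (k+1), j ≠ i ∧ c = Fin.castSucc j ∧ Bs c = As j) := by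
            intro c
            refine Fin.lastCases ?_ ?_ c
            · exact Or.inl ⟨rfl, hBlast⟩
            · intro j'
              by_cases hj : j' = i
              · subst hj
                exact Or.inr (Or.inl ⟨rfl, hBi⟩)
              · exact Or.inr (Or.inr ⟨j', hj, rfl, hBj j' hj⟩)
          -- helper: a pair of original `As` sets below the join gives a contradiction
          have hcontra : ∀ (j j' : Fin (k+1)) (U V : Set ℕ), j ≠ j' →
              EnumRed (As j) U → EnumRed (As j') V →
              EnumLt (ejoin U V) A → False := by
            intro j j' U V hjj' hU hV hUV
            refine hpair j j' hjj' (enumLt_of_le_of_lt ?_ hUV)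
            exact enumRed_join (enumRed_trans hU (enumRed_left U V))
              (enumRed_trans hV (enumRed_right U V))
          -- the goal
          have hgoal : ∀ (U V : Set ℕ),
              EnumRed (ejoin X (As i)) U → EnumRed (ejoin Y (As i)) V →
              EnumLt (ejoin U V) A → EnumLt (ejoin (ejoin X Y) (As i)) A := by
            intro U V hU hV hUV
            refine enumLt_of_le_of_lt ?_ hUV
            have hXU : EnumRed X U := enumRed_trans (enumRed_left X (As i)) hU
            have hYV : EnumRed Y V := enumRed_trans (enumRed_left Y (As i)) hV
            have hAiU : EnumRed (As i) U := enumRed_trans (enumRed_right X (As i)) hU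
            refine enumRed_join (enumRed_join ?_ ?_) ?_
            · exact enumRed_trans hXU (enumRed_left U V)
            · exact enumRed_trans hYV (enumRed_right U V)
            · exact enumRed_trans hAiU (enumRed_left U V)
          rcases hclass a with ⟨ha, hBa⟩ | ⟨ha, hBa⟩ | ⟨j, hj, ha, hBa⟩ <;>
            rcases hclass b with ⟨hb, hBb⟩ | ⟨hb, hBb⟩ | ⟨j', hj', hb, hBb⟩
          · exact absurd (ha.trans hb.symm) hab
          · -- a = last (Y side), b = i slot (X side)
            rw [hBa, hBb] at habLt
            exact hgoal _ _ (enumRed_refl _) (enumRed_refl _)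
              (enumLt_of_le_of_lt (ejoin_comm_le _ _) habLt)
          · -- a = last (Y side), b = As j'
            rw [hBa, hBb] at habLt
            exact absurd habLt (fun h => hcontra i j' (ejoin Y (As i)) (As j')
              (fun hh => hj' hh.symm) (enumRed_right Y (As i)) (enumRed_refl _) h)
          · -- a = i slot, b = last
            rw [hBa, hBb] at habLt
            exact hgoal _ _ (enumRed_refl _) (enumRed_refl _) habLt
          · exact absurd (ha.trans hb.symm) hab
          · -- a = i slot (X side), b = As j'
            rw [hBa, hBb] at habLt
            exact absurd habLt (fun h => hcontra i j' (ejoin X (As i)) (As j')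
              (fun hh => hj' hh.symm) (enumRed_right X (As i)) (enumRed_refl _) h)
          · -- a = As j, b = last (Y side)
            rw [hBa, hBb] at habLt
            exact absurd habLt (fun h => hcontra j i (As j) (ejoin Y (As i)) hj
              (enumRed_refl _) (enumRed_right Y (As i)) h)
          · -- a = As j, b = i slot (X side)
            rw [hBa, hBb] at habLt
            exact absurd habLt (fun h => hcontra j i (As j) (ejoin X (As i)) hj
              (enumRed_refl _) (enumRed_right X (As i)) h)
          · -- a = As j, b = As j'
            rw [hBa, hBb] at habLt
            have hjj' : j ≠ j' := by
              intro hh; apply hab; rw [ha, hb, hh]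
            exact absurd habLt (fun h => hcontra j j' (As j) (As j') hjj'
              (enumRed_refl _) (enumRed_refl _) h)
      -- the union of the ideals is exactly the strict lower cone
      have hcover : ∀ Z, EnumLt Z A → ∃ i, Z ∈ G i := by
        intro Z hZ
        set Bs : Fin (k+2) → Set ℕ := Fin.snoc As Z with hBs
        have hBslt : ∀ j, EnumLt (Bs j) A := by
          intro j
          refine Fin.lastCases ?_ ?_ j <;> simp only [hBs, Fin.snoc_last, Fin.snoc_castSucc]
          · exact hZ
          · exact hAs
        obtain ⟨a, b, hab, habLt⟩ := hm Bs hBslt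
        have hclass : ∀ c : Fin (k+2), (c = Fin.last (k+1) ∧ Bs c = Z) ∨
            (∃ j : Fin (k+1), c = Fin.castSucc j ∧ Bs c = As j) := by
          intro c
          refine Fin.lastCases ?_ ?_ c
          · exact Or.inl ⟨rfl, by simp [hBs]⟩
          · intro j'; exact Or.inr ⟨j', rfl, by simp [hBs]⟩
        rcases hclass a with ⟨ha, hBa⟩ | ⟨j, ha, hBa⟩ <;>
          rcases hclass b with ⟨hb, hBb⟩ | ⟨j', hb, hBb⟩
        · exact absurd (ha.trans hb.symm) hab
        · -- Z join As j'
          rw [hBa, hBb] at habLt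
          exact ⟨j', habLt⟩
        · rw [hBa, hBb] at habLt
          exact ⟨j, enumLt_of_le_of_lt (ejoin_comm_le _ _) habLt⟩
        · rw [hBa, hBb] at habLt
          have hjj' : j ≠ j' := by
            intro hh; apply hab; rw [ha, hb, hh]
          exact absurd habLt (hpair j j' hjj')
      -- pad `G` to a family indexed by `Fin n`
      have hkn : k + 1 ≤ n := hmn
      refine ⟨fun i => if h : (i : ℕ) < k + 1 then G ⟨i, h⟩ else G ⟨0, by omega⟩,
        ?_, ?_⟩
      · intro i
        by_cases h : (i : ℕ) < k + 1 <;> simp only [h, dif_pos, dif_neg, not_false_iff] <;>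
          apply hGideal
      · ext Z
        simp only [Set.mem_iUnion, Set.mem_setOf_eq]
        constructor
        · rintro ⟨i, hi⟩
          by_cases h : (i : ℕ) < k + 1
          · rw [dif_pos h] at hi
            exact hGlt _ _ hi
          · rw [dif_neg h] at hi
            exact hGlt _ _ hi
        · intro hZ
          obtain ⟨i, hi⟩ := hcover Z hZ
          refine ⟨⟨(i : ℕ), by omega⟩, ?_⟩
          have h : ((⟨(i : ℕ), by omega⟩ : Fin n) : ℕ) < k + 1 := i.2
          rw [dif_pos h]
          convert hi using 2
  · -- backward direction
    rintro ⟨F, hFI, hFU⟩ As hAs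
    have hmem : ∀ i : Fin (n+1), ∃ j : Fin n, As i ∈ F j := by
      intro i
      have : As i ∈ ⋃ j, F j := by rw [hFU]; exact hAs i
      exact Set.mem_iUnion.1 this
    choose g hg using hmem
    obtain ⟨i, j, hij, hgij⟩ := Fintype.exists_ne_map_eq_of_card_lt g (by simp)
    refine ⟨i, j, hij, ?_⟩
    have : ejoin (As i) (As j) ∈ F (g i) :=
      (hFI (g i)).2 (As i) (hg i) (As j) (hgij ▸ hg j)
    have : ejoin (As i) (As j) ∈ ⋃ j, F j := Set.mem_iUnion.2 ⟨g i, this⟩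
    rwa [hFU] at this

end Stmt13Main

/-- `A` is `n`-join irreducible iff `{Z : Z <ₑ A}` is a union of
`n` ideals. -/
theorem stmt13 (A : Set ℕ) (n : ℕ) (hn : 1 ≤ n) :
    NJoinIrr n A ↔
      ∃ F : Fin n → Set (Set ℕ), (∀ i, IsIdeal (F i)) ∧
        (⋃ i, F i) = {Z | EnumLt Z A} := by
  exact stmt13' A n hn
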